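/- Let (X, μ) be a probability space, P a self-adjoint Markov-type operator on L²(X,μ) with P1 = 1, P preserving the orthocomplement of constants with norm at most ρ there, and P nonnegativity-preserving. Let B ⊆ X be measurable with μ(B) = b, and let A ⊆ X be measurable such that P(1_B) = 0 almost everywhere on the complement of A, with μ(A) = b'. Then b' ≥ b / (ρ²(1−b) + b). -/

import Mathlib

open MeasureTheory
open scoped RealInnerProductSpace

/-- Expansion lemma: let `P` be a self-adjoint Markov-type operator on `L²(X,μ)`
fixing constants, with norm at most `ρ` on the orthocomplement of constants and
preserving nonnegativity. If `B`, `A` are measurable with `μ B = b`, `μ A = b'`,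
and `P 1_B = 0` a.e. off `A`, then `b' ≥ b / (ρ²(1−b) + b)`. -/
theorem neighbor_expansion
    {X : Type*} [MeasurableSpace X] (μ : Measure X) [IsProbabilityMeasure μ]
    (P : Lp ℝ 2 μ →L[ℝ] Lp ℝ 2 μ) (ρ : ℝ) (hρ : 0 ≤ ρ)
    (one : Lp ℝ 2 μ)
    (hone : one = indicatorConstLp 2 MeasurableSet.univ (measure_ne_top μ _) (1 : ℝ))
    (hP1 : P one = one)
    (hSA : ∀ f g : Lp ℝ 2 μ, ⟪P f, g⟫ = ⟪f, P g⟫)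
    (hbound : ∀ f : Lp ℝ 2 μ, ⟪f, one⟫ = 0 → ‖P f‖ ≤ ρ * ‖f‖)
    (hpos : ∀ f : Lp ℝ 2 μ, 0 ≤ f → 0 ≤ P f)
    (B A : Set X) (hB : MeasurableSet B) (hA : MeasurableSet A)
    (b b' : ℝ) (hb : (μ B).toReal = b) (hb' : (μ A).toReal = b')
    (hzero : ∀ᵐ x ∂μ, x ∉ A →
      (P (indicatorConstLp 2 hB (measure_ne_top μ B) (1 : ℝ)) : X → ℝ) x = 0)
    (hden : 0 < ρ ^ 2 * (1 - b) + b) :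
    b' ≥ b / (ρ ^ 2 * (1 - b) + b) := by
  set f : Lp ℝ 2 μ := indicatorConstLp 2 hB (measure_ne_top μ B) (1 : ℝ) with hf
  set u : Lp ℝ 2 μ := P f with hu
  have hb0 : 0 ≤ b := hb ▸ ENNReal.toReal_nonneg
  have hb'0 : 0 ≤ b' := hb' ▸ ENNReal.toReal_nonneg
  -- `one` is a.e. equal to the constant 1
  have hone1 : (one : X → ℝ) =ᵐ[μ] fun _ => (1 : ℝ) := by
    rw [hone]
    filter_upwards [indicatorConstLp_coeFn
      (p := 2) (hs := MeasurableSet.univ (α := X)) (hμs := measure_ne_top μ _) (c := (1:ℝ))]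
      with x hx
    simp [hx]
  -- inner products with `one` compute integrals
  have hinner_one : ∀ g : Lp ℝ 2 μ, ⟪one, g⟫ = ∫ x, g x ∂μ := by
    intro g
    rw [hone, L2.inner_indicatorConstLp_one MeasurableSet.univ (measure_ne_top μ _) g,
      Measure.restrict_univ]
  -- ⟪f, one⟫ = b
  have hfone : ⟪f, one⟫ = b := by
    rw [real_inner_comm, hinner_one f]
    have : ∫ x, f x ∂μ = ∫ x, Set.indicator B (fun _ => (1:ℝ)) x ∂μ :=
      integral_congr_ae (indicatorConstLp_coeFn)
    rw [this, integral_indicator_const _ hB]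
    simp [hb]
    exact hb
  -- ‖one‖ = 1 and ⟪one, one⟫ = 1
  have honeone : ⟪one, one⟫ = 1 := by
    rw [hinner_one one, integral_congr_ae hone1]
    simp
  -- ‖f‖ ^ 2 = b
  have hfsq : ‖f‖ ^ 2 = b := by
    rw [← real_inner_self_eq_norm_sq, hf,
      L2.inner_indicatorConstLp_one hB (measure_ne_top μ B)]
    have : ∀ᵐ x ∂μ, x ∈ B →
        (indicatorConstLp 2 hB (measure_ne_top μ B) (1:ℝ) : X → ℝ) x = 1 :=
      indicatorConstLp_coeFn_mem
    rw [setIntegral_congr_ae hB this]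
    simp [hb]
    exact hb
  -- the orthogonal part
  set g : Lp ℝ 2 μ := f - b • one with hg
  have hgone : ⟪g, one⟫ = 0 := by
    rw [hg, inner_sub_left, real_inner_smul_left, hfone, honeone]; ring
  have hgsq : ‖g‖ ^ 2 = b - b ^ 2 := by
    rw [hg, @norm_sub_sq_real]
    rw [real_inner_smul_right, hfone, norm_smul, mul_pow]
    have h1 : ‖one‖ ^ 2 = 1 := by rw [← real_inner_self_eq_norm_sq, honeone]
    rw [h1, hfsq]
    simp [abs_of_nonneg hb0]
    ring
  -- decompose u = P g + b • one
  have hudec : u = P g + b • one := by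
    have hbs : P (b • one) = b • one := by rw [P.map_smul, hP1]
    have hfg : g + b • one = f := by rw [hg]; abel
    calc u = P (g + b • one) := by rw [hfg]
      _ = P g + P (b • one) := map_add P _ _
      _ = P g + b • one := by rw [hbs]
  have hPgone : ⟪P g, one⟫ = 0 := by
    rw [hSA g one, hP1]; exact hgone
  -- ‖u‖² ≤ b * D
  have hPg : ‖P g‖ ^ 2 ≤ ρ ^ 2 * (b - b ^ 2) := by
    have h1 : ‖P g‖ ≤ ρ * ‖g‖ := hbound g hgone
    have h2 : ‖P g‖ ^ 2 ≤ (ρ * ‖g‖) ^ 2 := by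
      apply pow_le_pow_left₀ (norm_nonneg _) h1
    calc ‖P g‖ ^ 2 ≤ (ρ * ‖g‖) ^ 2 := h2
      _ = ρ ^ 2 * ‖g‖ ^ 2 := by ring
      _ = ρ ^ 2 * (b - b ^ 2) := by rw [hgsq]
  have husq : ‖u‖ ^ 2 ≤ b * (ρ ^ 2 * (1 - b) + b) := by
    have : ‖u‖ ^ 2 = ‖P g‖ ^ 2 + b ^ 2 := by
      rw [hudec, @norm_add_sq_real, real_inner_smul_right, hPgone, norm_smul, mul_pow]
      have h1 : ‖one‖ ^ 2 = 1 := by rw [← real_inner_self_eq_norm_sq, honeone]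
      rw [h1]
      simp [abs_of_nonneg hb0]
    rw [this]
    nlinarith [hPg]
  -- b = ⟪indicator A, u⟫
  have huint : Integrable (u : X → ℝ) μ := by
    exact (Lp.memLp u).integrable (by norm_num)
  have huone : ∫ x, u x ∂μ = b := by
    rw [← hinner_one u, real_inner_comm, hu, hSA f one, hP1, hfone]
  have hcompl : ∫ x in Aᶜ, u x ∂μ = 0 := by
    have : ∀ᵐ x ∂μ, x ∈ Aᶜ → u x = 0 := by
      filter_upwards [hzero] with x hx hxc using hx hxc
    rw [setIntegral_congr_ae hA.compl this]
    simp
  have hAint : ∫ x in A, u x ∂μ = b := by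
    have := integral_add_compl hA huint
    rw [hcompl, add_zero] at this
    rw [this, huone]
  have hiA : ⟪indicatorConstLp 2 hA (measure_ne_top μ A) (1:ℝ), u⟫ = b := by
    rw [L2.inner_indicatorConstLp_one hA (measure_ne_top μ A) u, hAint]
  -- Cauchy-Schwarz
  have hiAnormsq : ‖indicatorConstLp 2 hA (measure_ne_top μ A) (1:ℝ)‖ ^ 2 = b' := by
    rw [← real_inner_self_eq_norm_sq, L2.inner_indicatorConstLp_one hA (measure_ne_top μ A)]
    have : ∀ᵐ x ∂μ, x ∈ A →
        (indicatorConstLp 2 hA (measure_ne_top μ A) (1:ℝ) : X → ℝ) x = 1 :=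
      indicatorConstLp_coeFn_mem
    rw [setIntegral_congr_ae hA this]
    simp [hb']
    exact hb'
  have hCS : b ≤ ‖indicatorConstLp 2 hA (measure_ne_top μ A) (1:ℝ)‖ * ‖u‖ := by
    rw [← hiA]; exact real_inner_le_norm _ _
  have hsq : b ^ 2 ≤ b' * ‖u‖ ^ 2 := by
    have h := pow_le_pow_left₀ hb0 hCS 2
    calc b ^ 2 ≤ (‖indicatorConstLp 2 hA (measure_ne_top μ A) (1:ℝ)‖ * ‖u‖) ^ 2 := h
      _ = ‖indicatorConstLp 2 hA (measure_ne_top μ A) (1:ℝ)‖ ^ 2 * ‖u‖ ^ 2 := by ring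
      _ = b' * ‖u‖ ^ 2 := by rw [hiAnormsq]
  -- conclude
  rw [ge_iff_le, div_le_iff₀ hden]
  rcases eq_or_lt_of_le hb0 with hb0' | hb0'
  · have h0 : 0 ≤ b' * (ρ ^ 2 * (1 - b) + b) := mul_nonneg hb'0 hden.le
    linarith
  · have hkey : b ^ 2 ≤ b' * (b * (ρ ^ 2 * (1 - b) + b)) :=
      calc b ^ 2 ≤ b' * ‖u‖ ^ 2 := hsq
        _ ≤ b' * (b * (ρ ^ 2 * (1 - b) + b)) := mul_le_mul_of_nonneg_left husq hb'0
    have h2 : b * b ≤ b * (b' * (ρ ^ 2 * (1 - b) + b)) := by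
      calc b * b = b ^ 2 := by ring
        _ ≤ b' * (b * (ρ ^ 2 * (1 - b) + b)) := hkey
        _ = b * (b' * (ρ ^ 2 * (1 - b) + b)) := by ring
    exact le_of_mul_le_mul_left h2 hb0'
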